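/- Let n ≥ 4. The quasidihedral group QD_{2^n} has exactly 2^{n-2} + 1 distinct proper centralizers of elements, one of cardinality 2^{n-1} and the remaining 2^{n-2} of cardinality 4, and consequently the co-centralizer graph of QD_{2^n} is isomorphic to the star K_{1,2^{n-2}}. -/

import Mathlib

/-- Relators of the quasidihedral group
`⟨a, b : a^(2^(n-1)) = b^2 = 1, b a b⁻¹ = a^(2^(n-2) - 1)⟩`. -/
def qdRels (n : ℕ) : Set (FreeGroup (Fin 2)) :=
  {FreeGroup.of 0 ^ 2 ^ (n - 1), FreeGroup.of 1 ^ 2,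
    FreeGroup.of 1 * FreeGroup.of 0 * (FreeGroup.of 1)⁻¹ *
      (FreeGroup.of 0 ^ (2 ^ (n - 2) - 1))⁻¹}

/-- The quasidihedral group of order `2^n`. -/
abbrev QuasidihedralGroup (n : ℕ) : Type := PresentedGroup (qdRels n)

/-- A subgroup is a proper centralizer if it is proper and is the centralizer of some element. -/
def IsProperCentralizer {G : Type*} [Group G] (H : Subgroup G) : Prop :=
  H ≠ ⊤ ∧ ∃ x : G, H = Subgroup.centralizer {x}

/-- The centralizer graph: vertices are the proper centralizers of elements, two distinct
vertices adjacent iff they have the same cardinality. -/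
def centralizerGraph (G : Type*) [Group G] :
    SimpleGraph {H : Subgroup G // IsProperCentralizer H} where
  Adj A B := A ≠ B ∧ Nat.card A.1 = Nat.card B.1
  symm := ⟨fun _ _ h => ⟨h.1.symm, h.2.symm⟩⟩
  loopless := ⟨fun _ h => h.1 rfl⟩

/-- The co-centralizer graph is the complement of the centralizer graph. -/
def cocentralizerGraph (G : Type*) [Group G] :
    SimpleGraph {H : Subgroup G // IsProperCentralizer H} :=
  (centralizerGraph G)ᶜ

/-- The star graph `K_{1,n}` on `n+1` vertices. -/
def starGraph (n : ℕ) : SimpleGraph (Fin 1 ⊕ Fin n) :=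
  completeBipartiteGraph (Fin 1) (Fin n)

namespace QDModel

variable (k : ℕ)

/-- The exponent-twisting unit: `e j = 1` if `j = 0`, else `2^(k+2) - 1`. -/
def e (j : ZMod 2) : ZMod (2 ^ (k + 3)) :=
  if j = 0 then 1 else 2 ^ (k + 2) - 1

variable {k}

lemma zmod2_cases (j : ZMod 2) : j = 0 ∨ j = 1 := by revert j; decide

lemma e_zero : e k (0 : ZMod 2) = 1 := if_pos rfl

lemma e_one : e k (1 : ZMod 2) = 2 ^ (k + 2) - 1 := if_neg (by decide)

lemma sq_key : ((2:ZMod (2^(k+3))) ^ (k + 2) - 1) * (2 ^ (k + 2) - 1) = 1 := by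
  have h1 : ((2:ZMod (2^(k+3))) ^ (k+3)) = 0 := by
    have := ZMod.natCast_self (2 ^ (k + 3))
    push_cast at this
    exact this
  have h2 : ((2:ZMod (2^(k+3))) ^ (k+2)) * (2 ^ (k+2)) = 0 := by
    have : ((2:ZMod (2^(k+3))) ^ (k+2)) * (2 ^ (k+2)) = 2 ^ (k+3) * 2 ^ (k+1) := by ring
    rw [this, h1, zero_mul]
  have : ((2:ZMod (2^(k+3))) ^ (k + 2) - 1) * (2 ^ (k + 2) - 1)
      = 2 ^ (k+2) * 2 ^ (k+2) - 2 ^ (k+3) + 1 := by ring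
  rw [this, h2, h1]; ring

lemma e_mul (i j : ZMod 2) : e k (i + j) = e k i * e k j := by
  rcases zmod2_cases i with rfl | rfl <;> rcases zmod2_cases j with rfl | rfl <;>
    simp [e_zero, e_one, show (1+1 : ZMod 2) = 0 by decide]
  exact (sq_key).symm

end QDModel

/-- Concrete model of the quasidihedral group of order `2^(k+4)`. -/
@[ext]
structure QD (k : ℕ) where
  i : ZMod (2 ^ (k + 3))
  j : ZMod 2
deriving DecidableEq

namespace QD

variable {k : ℕ}

instance : Mul (QD k) := ⟨fun g h => ⟨g.i + QDModel.e k g.j * h.i, g.j + h.j⟩⟩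
instance : One (QD k) := ⟨⟨0, 0⟩⟩
instance : Inv (QD k) := ⟨fun g => ⟨-(QDModel.e k g.j * g.i), g.j⟩⟩

lemma mul_def (g h : QD k) : g * h = ⟨g.i + QDModel.e k g.j * h.i, g.j + h.j⟩ := rfl
lemma one_def : (1 : QD k) = ⟨0, 0⟩ := rfl
lemma inv_def (g : QD k) : g⁻¹ = ⟨-(QDModel.e k g.j * g.i), g.j⟩ := rfl

instance : Group (QD k) :=
  Group.ofLeftAxioms
    (fun a b c => by
      simp only [mul_def, QDModel.e_mul]
      ext <;> simp <;> ring)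
    (fun a => by simp [mul_def, one_def, QDModel.e_zero])
    (fun a => by
      simp only [mul_def, inv_def, one_def]
      ext
      · simp
      · simp [show ∀ j : ZMod 2, j + j = 0 by decide])

end QD

namespace QDModel
variable {k : ℕ}

local notation "N" => 2 ^ (k + 3)

lemma c_ne_zero : ((2:ZMod N) ^ (k+2)) ≠ 0 := by
  have : (((2 ^ (k+2) : ℕ)) : ZMod N) ≠ 0 := by
    rw [Ne, ZMod.natCast_eq_zero_iff]
    intro h
    have := Nat.le_of_dvd (by positivity) h
    have : (2:ℕ)^(k+3) > 2^(k+2) := Nat.pow_lt_pow_right one_lt_two (by omega)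
    omega
  push_cast at this
  exact this

lemma two_mul_eq_zero_iff (x : ZMod N) :
    2 * x = 0 ↔ x = 0 ∨ x = 2 ^ (k+2) := by
  constructor
  · intro h
    have hx : ((2 * x.val : ℕ) : ZMod N) = 0 := by
      push_cast [ZMod.natCast_val, ZMod.cast_id]
      exact h
    rw [ZMod.natCast_eq_zero_iff] at hx
    have h2 : (2:ℕ)^(k+3) = 2 * 2^(k+2) := by ring
    obtain ⟨t, ht⟩ := hx
    have hv : x.val < 2 ^ (k+3) := ZMod.val_lt x
    have hp : (0:ℕ) < 2^(k+2) := by positivity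
    have h2' : (2:ℕ)^(k+3) = 2 * 2^(k+2) := by ring
    have key : 2 * x.val = 2 * 2^(k+2) * t := by rw [← h2']; exact ht
    have hv' : x.val < 2 * 2^(k+2) := lt_of_lt_of_eq hv h2'
    have ht2 : t ≤ 1 := by nlinarith
    have hval : x.val = 0 ∨ x.val = 2^(k+2) := by
      interval_cases t <;> omega
    have hx2 : x = ((x.val : ℕ) : ZMod N) := by rw [ZMod.natCast_val, ZMod.cast_id]
    rcases hval with hv0 | hv0
    · left; rw [hx2, hv0]; simp
    · right; rw [hx2, hv0]; push_cast; ring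
  · rintro (rfl | rfl)
    · ring
    · have : (2:ZMod N) * 2^(k+2) = ((2^(k+3) : ℕ) : ZMod N) := by push_cast; ring
      rw [this, ZMod.natCast_self]

lemma unit_odd : IsUnit ((2:ZMod N)^(k+1) - 1) := by
  have h1 : (1:ℕ) ≤ 2^(k+1) := Nat.one_le_two_pow
  have hcast : ((2:ZMod N)^(k+1) - 1) = (((2^(k+1) - 1 : ℕ)) : ZMod N) := by
    push_cast [Nat.cast_sub h1]; ring
  rw [hcast, ZMod.isUnit_iff_coprime]
  apply Nat.Coprime.pow_right
  have hodd : Odd (2^(k+1) - 1) := by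
    refine Nat.Even.sub_odd h1 ?_ odd_one
    exact (Nat.even_pow' (by omega)).mpr even_two
  rwa [Nat.coprime_two_right]

lemma s_mul_eq_self_iff (x : ZMod N) :
    ((2:ZMod N) ^ (k+2) - 1) * x = x ↔ x = 0 ∨ x = 2 ^ (k+2) := by
  rw [← two_mul_eq_zero_iff]
  obtain ⟨u, hu⟩ := (unit_odd (k := k))
  constructor
  · intro h
    have h2 : ((2:ZMod N)^(k+2) - 2) * x = 0 := by
      have : ((2:ZMod N)^(k+2) - 2) * x = ((2:ZMod N) ^ (k+2) - 1) * x - x := by ring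
      rw [this, h, sub_self]
    have h3 : (u : ZMod N) * (2 * x) = 0 := by
      rw [← h2, hu]; ring
    have := congrArg (fun y => ((u⁻¹ : (ZMod N)ˣ) : ZMod N) * y) h3
    simpa [← mul_assoc] using this
  · intro h
    have : ((2:ZMod N) ^ (k+2) - 1) * x - x = ((2:ZMod N)^(k+1) - 1) * (2 * x) := by ring
    have h4 : ((2:ZMod N) ^ (k+2) - 1) * x - x = 0 := by rw [this, h, mul_zero]
    linear_combination h4

end QDModel

namespace QD

open Subgroup QDModel

variable {k : ℕ}

local notation "N" => 2 ^ (k + 3)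
local notation "c" => ((2:ZMod N) ^ (k+2))

lemma hc2 : 2 * c = 0 := (two_mul_eq_zero_iff (k := k) c).mpr (Or.inr rfl)

lemma two_ne_zero' : (2 : ZMod N) ≠ 0 := by
  intro h
  apply c_ne_zero (k := k)
  have : (2:ZMod N) * 2^(k+1) = c := by ring
  rw [← this, h, zero_mul]

lemma one_ne_c : (1 : ZMod N) ≠ c := by
  intro h
  apply two_ne_zero' (k := k)
  rw [show (2:ZMod N) = 2 * 1 by ring, h]
  exact hc2

lemma one_ne_zero'' : (1 : ZMod N) ≠ 0 := by
  intro h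
  apply two_ne_zero' (k := k)
  rw [show (2:ZMod N) = 2 * 1 by ring, h, mul_zero]

/-- The cyclic subgroup `⟨a⟩` of the model. -/
def Asub (k : ℕ) : Subgroup (QD k) where
  carrier := {g | g.j = 0}
  one_mem' := rfl
  mul_mem' := by
    intro a b ha hb
    simp only [Set.mem_setOf_eq, mul_def] at *
    rw [ha, hb, add_zero]
  inv_mem' := by
    intro a ha
    simpa [inv_def] using ha

lemma mem_Asub {g : QD k} : g ∈ Asub k ↔ g.j = 0 := Iff.rfl

lemma card_Asub : Nat.card (Asub k) = 2 ^ (k + 3) := by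
  have e : Asub k ≃ ZMod N :=
    { toFun := fun g => g.1.i
      invFun := fun x => ⟨⟨x, 0⟩, rfl⟩
      left_inv := fun g => Subtype.ext (QD.ext rfl g.2.symm)
      right_inv := fun x => rfl }
  rw [Nat.card_congr e, Nat.card_zmod]

lemma Asub_ne_top : Asub k ≠ ⊤ := by
  intro h
  have : (⟨0, 1⟩ : QD k) ∈ Asub k := h.symm ▸ Subgroup.mem_top _
  rw [mem_Asub] at this
  exact one_ne_zero (α := ZMod 2) this

lemma cent_A0 {i : ZMod N} (hi : 2 * i ≠ 0) :
    Subgroup.centralizer {(⟨i, 0⟩ : QD k)} = Asub k := by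
  ext g
  obtain ⟨p, q⟩ := g
  rw [Subgroup.mem_centralizer_singleton_iff, mem_Asub]
  simp only [mul_def, QD.ext_iff, e_zero, one_mul, add_zero, zero_add, and_true]
  constructor
  · intro h
    have h2 : e k q * i = i := by linear_combination h
    rcases zmod2_cases q with rfl | rfl
    · rfl
    · rw [e_one] at h2
      exact absurd ((s_mul_eq_self_iff i).mp h2) (by
        rw [← two_mul_eq_zero_iff]; exact hi)
  · rintro rfl
    rw [e_zero, one_mul]; ring

lemma cent_center {i : ZMod N} (hi : 2 * i = 0) :
    Subgroup.centralizer {(⟨i, 0⟩ : QD k)} = ⊤ := by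
  rw [eq_top_iff]
  rintro ⟨p, q⟩ -
  rw [Subgroup.mem_centralizer_singleton_iff]
  simp only [mul_def, QD.ext_iff, e_zero, one_mul, add_zero, zero_add, and_true]
  have h2 : e k q * i = i := by
    rcases zmod2_cases q with rfl | rfl
    · rw [e_zero, one_mul]
    · rw [e_one]
      exact (s_mul_eq_self_iff i).mpr ((two_mul_eq_zero_iff i).mp hi)
  linear_combination h2

lemma cent_B_carrier (i : ZMod N) :
    (Subgroup.centralizer {(⟨i, 1⟩ : QD k)} : Set (QD k)) =
      {⟨0, 0⟩, ⟨c, 0⟩, ⟨i, 1⟩, ⟨i + c, 1⟩} := by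
  ext g
  obtain ⟨p, q⟩ := g
  rw [SetLike.mem_coe, Subgroup.mem_centralizer_singleton_iff]
  simp only [mul_def, QD.ext_iff, e_one, Set.mem_insert_iff, Set.mem_singleton_iff,
    Set.mem_setOf_eq]
  have hq : q + 1 = 1 + q := by ring
  rcases zmod2_cases q with rfl | rfl
  · rw [e_zero]
    constructor
    · rintro ⟨h, -⟩
      have h2 : (2^(k+2) - 1 : ZMod N) * p = p := by linear_combination - h
      have := (s_mul_eq_self_iff p).mp h2
      rcases this with rfl | rfl
      · left; exact ⟨rfl, rfl⟩
      · right; left; exact ⟨rfl, rfl⟩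
    · rintro (⟨rfl, -⟩ | ⟨rfl, -⟩ | ⟨-, h⟩ | ⟨-, h⟩)
      · constructor
        · ring
        · rfl
      · constructor
        · have : (2^(k+2) - 1 : ZMod N) * c = c := (s_mul_eq_self_iff c).mpr (Or.inr rfl)
          linear_combination - this
        · rfl
      · exact absurd h (by intro hh; exact one_ne_zero (α := ZMod 2) hh.symm)
      · exact absurd h (by intro hh; exact one_ne_zero (α := ZMod 2) hh.symm)
  · constructor
    · rintro ⟨h, -⟩
      have h2 : (2^(k+2) - 1 : ZMod N) * (i - p) = i - p := by
        rw [e_one] at h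
        linear_combination h
      have := (s_mul_eq_self_iff (i - p)).mp h2
      rcases this with h3 | h3
      · right; right; left
        constructor
        · linear_combination - h3
        · rfl
      · right; right; right
        constructor
        · have hcc : (c : ZMod N) = -c := by linear_combination hc2 (k := k)
          rw [hcc]
          linear_combination - h3
        · rfl
    · rintro (⟨-, h⟩ | ⟨-, h⟩ | ⟨rfl, -⟩ | ⟨rfl, -⟩)
      · exact absurd h (by intro hh; exact one_ne_zero (α := ZMod 2) hh)
      · exact absurd h (by intro hh; exact one_ne_zero (α := ZMod 2) hh)
      · exact ⟨by rw [e_one], rfl⟩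
      · refine ⟨?_, rfl⟩
        rw [e_one]
        have hcc : (2^(k+2) - 1 : ZMod N) * c = c := (s_mul_eq_self_iff c).mpr (Or.inr rfl)
        linear_combination - hcc

lemma self_mem_cent (x : QD k) : x ∈ Subgroup.centralizer {x} :=
  Subgroup.mem_centralizer_singleton_iff.mpr rfl

lemma card_cent_B (i : ZMod N) :
    Nat.card (Subgroup.centralizer {(⟨i, 1⟩ : QD k)}) = 4 := by
  have h0 : Nat.card (Subgroup.centralizer {(⟨i, 1⟩ : QD k)}) =
      (Subgroup.centralizer {(⟨i, 1⟩ : QD k)} : Set (QD k)).ncard := by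
    rw [← Nat.card_coe_set_eq, SetLike.coe_sort_coe]
  rw [h0, cent_B_carrier]
  have hc0 : (c : ZMod N) ≠ 0 := c_ne_zero
  have h01 : ((0 : ZMod 2)) ≠ 1 := by decide
  have hic : i ≠ i + c := by
    intro h
    exact hc0 (by linear_combination - h)
  rw [Set.ncard_insert_of_notMem (by simp [QD.ext_iff] <;> tauto),
    Set.ncard_insert_of_notMem (by simp [QD.ext_iff] <;> tauto),
    Set.ncard_insert_of_notMem (by simp [QD.ext_iff] <;> tauto),
    Set.ncard_singleton]

lemma cent_B_ne_top (i : ZMod N) :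
    Subgroup.centralizer {(⟨i, 1⟩ : QD k)} ≠ ⊤ := by
  intro h
  have h1 : (⟨1, 0⟩ : QD k) ∈ Subgroup.centralizer {(⟨i, 1⟩ : QD k)} :=
    h.symm ▸ Subgroup.mem_top _
  have h2 : (⟨1, 0⟩ : QD k) ∈ (Subgroup.centralizer {(⟨i, 1⟩ : QD k)} : Set (QD k)) := h1
  rw [cent_B_carrier] at h2
  simp only [Set.mem_insert_iff, Set.mem_singleton_iff, QD.ext_iff] at h2
  rcases h2 with ⟨h, -⟩ | ⟨h, -⟩ | ⟨-, h⟩ | ⟨-, h⟩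
  · exact one_ne_zero'' (k := k) h
  · exact one_ne_c (k := k) h
  · exact absurd h (by decide)
  · exact absurd h (by decide)

lemma cent_B_ne_Asub (i : ZMod N) :
    Subgroup.centralizer {(⟨i, 1⟩ : QD k)} ≠ Asub k := by
  intro h
  have h1 : (⟨1, 0⟩ : QD k) ∈ Asub k := rfl
  rw [← h] at h1
  have h2 : (⟨1, 0⟩ : QD k) ∈ (Subgroup.centralizer {(⟨i, 1⟩ : QD k)} : Set (QD k)) := h1
  rw [cent_B_carrier] at h2
  simp only [Set.mem_insert_iff, Set.mem_singleton_iff, QD.ext_iff] at h2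
  rcases h2 with ⟨h, -⟩ | ⟨h, -⟩ | ⟨-, h⟩ | ⟨-, h⟩
  · exact one_ne_zero'' (k := k) h
  · exact one_ne_c (k := k) h
  · exact absurd h (by decide)
  · exact absurd h (by decide)

lemma Asub_eq_cent : Asub k = Subgroup.centralizer {(⟨1, 0⟩ : QD k)} := by
  rw [cent_A0]
  rw [mul_one]
  exact two_ne_zero'

lemma cent_B_add_c (i : ZMod N) :
    Subgroup.centralizer {(⟨i, 1⟩ : QD k)} =
      Subgroup.centralizer {(⟨i + c, 1⟩ : QD k)} := by
  rw [SetLike.ext'_iff, cent_B_carrier, cent_B_carrier]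
  have h1 : i + c + c = i := by linear_combination hc2 (k := k)
  rw [h1]
  ext g
  simp only [Set.mem_insert_iff, Set.mem_singleton_iff]
  tauto

lemma cent_B_inj {i j : ZMod N}
    (h : Subgroup.centralizer {(⟨i, 1⟩ : QD k)} = Subgroup.centralizer {(⟨j, 1⟩ : QD k)}) :
    j = i ∨ j = i + c := by
  have h1 : (⟨j, 1⟩ : QD k) ∈ Subgroup.centralizer {(⟨i, 1⟩ : QD k)} :=
    h ▸ self_mem_cent _
  have h2 : (⟨j, 1⟩ : QD k) ∈ (Subgroup.centralizer {(⟨i, 1⟩ : QD k)} : Set (QD k)) := h1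
  rw [cent_B_carrier] at h2
  simp only [Set.mem_insert_iff, Set.mem_singleton_iff, QD.ext_iff] at h2
  rcases h2 with ⟨-, h⟩ | ⟨-, h⟩ | ⟨h, -⟩ | ⟨h, -⟩
  · exact absurd h (by decide)
  · exact absurd h (by decide)
  · exact Or.inl h
  · exact Or.inr h

lemma classify {H : Subgroup (QD k)} (h : H ≠ ⊤) (hx : ∃ x : QD k, H = Subgroup.centralizer {x}) :
    H = Asub k ∨ ∃ i : ZMod N, H = Subgroup.centralizer {(⟨i, 1⟩ : QD k)} := by
  obtain ⟨x, rfl⟩ := hx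
  obtain ⟨i, q⟩ := x
  rcases zmod2_cases q with rfl | rfl
  · by_cases hi : 2 * i = 0
    · exact absurd (cent_center hi) h
    · exact Or.inl (cent_A0 hi)
  · exact Or.inr ⟨i, rfl⟩

end QD

/-! ### Identification of the presented group with the model -/

namespace QDIso

open QDModel

variable {k : ℕ}

local notation "N" => 2 ^ (k + 3)
local notation "σ" => 2 ^ (k + 2) - 1  -- as a natural number

abbrev PG (k : ℕ) := QuasidihedralGroup (k + 4)

def α : PG k := PresentedGroup.of 0
def β : PG k := PresentedGroup.of 1

lemma mk_rel {r : FreeGroup (Fin 2)} (hr : r ∈ qdRels (k + 4)) :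
    PresentedGroup.mk (qdRels (k + 4)) r = 1 :=
  (QuotientGroup.eq_one_iff r).mpr (Subgroup.subset_normalClosure hr)

lemma rel1 : (α : PG k) ^ (2 ^ (k + 3)) = 1 := by
  have h := mk_rel (k := k) (show FreeGroup.of 0 ^ 2 ^ (k + 4 - 1) ∈ qdRels (k + 4) from
    Set.mem_insert _ _)
  rw [map_pow] at h
  exact h

lemma rel2 : (β : PG k) ^ 2 = 1 := by
  have h := mk_rel (k := k) (show FreeGroup.of 1 ^ 2 ∈ qdRels (k + 4) from
    Set.mem_insert_of_mem _ (Set.mem_insert _ _))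
  rw [map_pow] at h
  exact h

lemma rel3 : (β : PG k) * α * β⁻¹ = α ^ (σ : ℕ) := by
  have h := mk_rel (k := k) (show
      FreeGroup.of 1 * FreeGroup.of 0 * (FreeGroup.of 1)⁻¹ *
        (FreeGroup.of 0 ^ (2 ^ (k + 4 - 2) - 1))⁻¹ ∈ qdRels (k + 4) from
    Set.mem_insert_of_mem _ (Set.mem_insert_of_mem _ rfl))
  rw [map_mul, map_mul, map_mul, map_inv, map_inv, map_pow] at h
  rw [mul_inv_eq_one] at h
  exact h

lemma beta_inv : (β : PG k)⁻¹ = β := by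
  have h := rel2 (k := k)
  rw [pow_two] at h
  exact inv_eq_of_mul_eq_one_right h

lemma conj_pow_grp {G : Type*} [Group G] (a b : G) (m : ℕ) :
    (a * b * a⁻¹) ^ m = a * b ^ m * a⁻¹ := by
  induction m with
  | zero => simp
  | succ m ih => rw [pow_succ, pow_succ, ih]; group

lemma rel3' (m : ℕ) : (β : PG k) * α ^ m = α ^ ((σ : ℕ) * m) * β := by
  have h : (β : PG k) * α ^ m * β⁻¹ = α ^ ((σ : ℕ) * m) := by
    rw [← conj_pow_grp, rel3, ← pow_mul]
  calc (β : PG k) * α ^ m = β * α ^ m * β⁻¹ * β := by group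
  _ = _ := by rw [h]

lemma alpha_mod (m : ℕ) : (α : PG k) ^ m = α ^ (m % N) :=
  pow_eq_pow_mod m rel1

/-- `ζ x = α ^ x.val`. -/
def ζ (x : ZMod N) : PG k := α ^ x.val

lemma zeta_cast (m : ℕ) : (α : PG k) ^ m = ζ (m : ZMod N) := by
  rw [ζ, ZMod.val_natCast, ← alpha_mod]

lemma zeta_add (x y : ZMod N) : (ζ (x + y) : PG k) = ζ x * ζ y := by
  have h1 : (ζ (x + y) : PG k) = α ^ ((x.val + y.val) % N) := by
    rw [ζ, ZMod.val_add]
  rw [h1, ← alpha_mod, pow_add, ζ, ζ]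

lemma zeta_one : (ζ 0 : PG k) = 1 := by
  rw [ζ, ZMod.val_zero, pow_zero]

lemma beta_zeta (x : ZMod N) : (β : PG k) * ζ x = ζ ((2 ^ (k+2) - 1 : ZMod N) * x) * β := by
  obtain ⟨m, rfl⟩ := ZMod.natCast_zmod_surjective (n := N) x
  rw [← zeta_cast, rel3', zeta_cast]
  congr 2
  push_cast [Nat.cast_sub (Nat.one_le_two_pow : (1:ℕ) ≤ 2 ^ (k+2))]
  ring

/-- The inverse map from the model to the presented group. -/
def ψ (g : QD k) : PG k := ζ g.i * β ^ g.j.val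

lemma psi_mul (g h : QD k) : ψ (g * h) = ψ g * ψ h := by
  obtain ⟨gi, gj⟩ := g
  obtain ⟨hi, hj⟩ := h
  rcases QDModel.zmod2_cases gj with rfl | rfl
  · show ζ (gi + e k 0 * hi) * β ^ (((0:ZMod 2) + hj).val) = _
    rw [QDModel.e_zero, one_mul, zeta_add, zero_add]
    show _ = ζ gi * β ^ ((0:ZMod 2)).val * (ζ hi * β ^ hj.val)
    rw [ZMod.val_zero, pow_zero, mul_one, mul_assoc]
  · have key : β * (ζ hi * β ^ hj.val) =
        ζ ((2 ^ (k+2) - 1 : ZMod N) * hi) * β ^ (((1:ZMod 2) + hj).val) := by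
      rw [← mul_assoc, beta_zeta, mul_assoc]
      congr 1
      rcases QDModel.zmod2_cases hj with rfl | rfl
      · rw [show ((1:ZMod 2) + 0).val = 1 from rfl, ZMod.val_zero, pow_zero, mul_one, pow_one]
      · rw [show ((1:ZMod 2) + 1).val = 0 from rfl, show ((1:ZMod 2)).val = 1 from rfl,
          pow_zero, pow_one, ← pow_two, rel2]
    show ζ (gi + e k 1 * hi) * β ^ (((1:ZMod 2) + hj).val)
        = ζ gi * β ^ ((1:ZMod 2)).val * (ζ hi * β ^ hj.val)
    rw [show ((1:ZMod 2)).val = 1 from rfl, pow_one, mul_assoc, key, QDModel.e_one,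
      zeta_add, mul_assoc]

/-- `ψ` as a monoid hom. -/
def Ψ : QD k →* PG k := MonoidHom.mk' ψ psi_mul

def fgen : Fin 2 → QD k := ![⟨1, 0⟩, ⟨0, 1⟩]

lemma A_pow (m : ℕ) : (⟨1, 0⟩ : QD k) ^ m = ⟨(m : ZMod N), 0⟩ := by
  induction m with
  | zero => rw [pow_zero, Nat.cast_zero]; rfl
  | succ m ih =>
    rw [pow_succ, ih, QD.mul_def]
    simp [QDModel.e_zero]

lemma fgen_rels : ∀ r ∈ qdRels (k + 4), FreeGroup.lift (fgen (k := k)) r = 1 := by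
  intro r hr
  rcases hr with rfl | rfl | rfl
  · rw [map_pow, FreeGroup.lift_apply_of]
    show (⟨1, 0⟩ : QD k) ^ (2 ^ (k + 3)) = 1
    rw [A_pow]
    rw [show (((2 ^ (k+3) : ℕ)) : ZMod N) = 0 from ZMod.natCast_self _]
    rfl
  · rw [map_pow, FreeGroup.lift_apply_of]
    show (⟨0, 1⟩ : QD k) ^ 2 = 1
    rw [pow_two, QD.mul_def]
    simp only [QDModel.e_one, mul_zero, add_zero]
    rw [show ((1:ZMod 2) + 1) = 0 by decide]
    rfl
  · simp only [map_mul, map_inv, map_pow, FreeGroup.lift_apply_of]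
    show fgen 1 * fgen 0 * (fgen 1)⁻¹ * ((fgen 0) ^ (2 ^ (k + 2) - 1 : ℕ))⁻¹ = 1
    rw [mul_inv_eq_one]
    show (⟨0,1⟩ : QD k) * ⟨1,0⟩ * (⟨0,1⟩ : QD k)⁻¹ = (⟨1,0⟩ : QD k) ^ (2 ^ (k + 2) - 1 : ℕ)
    rw [A_pow, QD.inv_def, QD.mul_def, QD.mul_def]
    simp only [QDModel.e_one, mul_one, mul_zero, add_zero, zero_add, neg_zero, mul_zero]
    congr 1
    push_cast [Nat.cast_sub (Nat.one_le_two_pow : (1:ℕ) ≤ 2 ^ (k+2))]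
    ring

/-- The hom from the presented group to the model. -/
def φ : PG k →* QD k := PresentedGroup.toGroup fgen_rels

lemma phi_alpha : (φ (α : PG k)) = ⟨1, 0⟩ := PresentedGroup.toGroup.of _
lemma phi_beta : (φ (β : PG k)) = ⟨0, 1⟩ := PresentedGroup.toGroup.of _

lemma phi_psi (g : QD k) : φ (Ψ g : PG k) = g := by
  obtain ⟨i, j⟩ := g
  show φ (ζ i * β ^ j.val) = _
  rw [map_mul, map_pow, phi_beta, ζ, map_pow, phi_alpha, A_pow]
  rw [ZMod.natCast_val, ZMod.cast_id]
  rcases QDModel.zmod2_cases j with rfl | rfl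
  · rw [ZMod.val_zero, pow_zero, mul_one]
  · have hv : ((1:ZMod 2)).val = 1 := rfl
    rw [hv, pow_one, QD.mul_def]
    simp [QDModel.e_zero]

lemma psi_apply (g : QD k) : Ψ g = ζ g.i * β ^ g.j.val := rfl

lemma psi_A : Ψ (⟨1, 0⟩ : QD k) = α := by
  haveI : Fact (1 < 2 ^ (k+3)) := ⟨by have := Nat.one_lt_two_pow_iff (n := k+3); omega⟩
  rw [psi_apply]
  show ζ 1 * β ^ ((0:ZMod 2)).val = α
  rw [ZMod.val_zero, pow_zero, mul_one, ζ, ZMod.val_one, pow_one]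

lemma psi_B : Ψ (⟨0, 1⟩ : QD k) = β := by
  rw [psi_apply]
  show ζ 0 * β ^ ((1:ZMod 2)).val = β
  rw [zeta_one, one_mul, show ((1:ZMod 2)).val = 1 from rfl, pow_one]

lemma psi_phi (x : PG k) : Ψ (φ x) = x := by
  have h : (Ψ : QD k →* PG k).comp φ = MonoidHom.id (PG k) := by
    apply PresentedGroup.ext
    intro x
    fin_cases x
    · show Ψ (φ (α : PG k)) = α
      rw [phi_alpha, psi_A]
    · show Ψ (φ (β : PG k)) = β
      rw [phi_beta, psi_B]
  exact DFunLike.congr_fun h x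

/-- The isomorphism between the presented quasidihedral group and the model. -/
def Φ : PG k ≃* QD k :=
  { toFun := φ
    invFun := ψ
    left_inv := psi_phi
    right_inv := phi_psi
    map_mul' := map_mul φ }

end QDIso

/-! ### Transfer lemmas along a group isomorphism -/

section Transfer

variable {G H : Type*} [Group G] [Group H]


lemma map_centralizer (e : G ≃* H) (x : G) :
    (Subgroup.centralizer {x}).map e.toMonoidHom = Subgroup.centralizer {e x} := by
  ext g
  rw [Subgroup.mem_map_equiv, Subgroup.mem_centralizer_singleton_iff,
    Subgroup.mem_centralizer_singleton_iff]
  constructor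
  · intro h
    have h2 := congrArg e h
    simpa only [map_mul, MulEquiv.apply_symm_apply] using h2
  · intro h
    have h2 := congrArg e.symm h
    simpa only [map_mul, MulEquiv.symm_apply_apply] using h2

lemma map_eq_top_iff' (e : G ≃* H) {K : Subgroup G} :
    K.map e.toMonoidHom = ⊤ ↔ K = ⊤ := by
  constructor
  · intro h
    apply Subgroup.map_injective (f := e.toMonoidHom) e.injective
    rw [h, Subgroup.map_top_of_surjective _ e.surjective]
  · rintro rfl
    exact Subgroup.map_top_of_surjective _ e.surjective

lemma map_map_symm (e : G ≃* H) (K : Subgroup G) :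
    (K.map e.toMonoidHom).map e.symm.toMonoidHom = K := by
  rw [Subgroup.map_map]
  have : (e.symm.toMonoidHom.comp e.toMonoidHom) = MonoidHom.id G := by
    ext x; simp
  rw [this, Subgroup.map_id]

lemma card_map (e : G ≃* H) (K : Subgroup G) :
    Nat.card (K.map e.toMonoidHom) = Nat.card K :=
  (Nat.card_congr (e.subgroupMap K).toEquiv).symm

lemma isProperCentralizer_map (e : G ≃* H) {K : Subgroup G} :
    IsProperCentralizer (K.map e.toMonoidHom) ↔ IsProperCentralizer K := by
  constructor
  · rintro ⟨hne, x, hx⟩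
    refine ⟨fun h => hne (by rw [h]; exact Subgroup.map_top_of_surjective _ e.surjective), ?_⟩
    refine ⟨e.symm x, ?_⟩
    have := congrArg (Subgroup.map e.symm.toMonoidHom) hx
    rw [map_map_symm] at this
    rw [this]
    exact map_centralizer e.symm x
  · rintro ⟨hne, x, rfl⟩
    refine ⟨fun h => hne ((map_eq_top_iff' e).mp h), e x, map_centralizer e x⟩

end Transfer

/-! ### Final assembly -/


namespace QDFinal

open QDIso QDModel Subgroup

variable {k : ℕ}

local notation "N" => 2 ^ (k + 3)

def Θ (k : ℕ) : QD k ≃* PG k := (Φ (k := k)).symm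

def bigH (k : ℕ) : Subgroup (PG k) := (QD.Asub k).map (Θ k).toMonoidHom

def smallH (k : ℕ) (t : Fin (2 ^ (k + 2))) : Subgroup (PG k) :=
  (Subgroup.centralizer
    {(⟨((t : ℕ) : ZMod (2 ^ (k + 3))), 1⟩ : QD k)}).map (Θ k).toMonoidHom

lemma bigH_proper : IsProperCentralizer (bigH k) :=
  (isProperCentralizer_map _).mpr ⟨QD.Asub_ne_top, ⟨1, 0⟩, QD.Asub_eq_cent⟩

lemma bigH_card : Nat.card (bigH k) = 2 ^ (k + 3) := by
  rw [bigH, card_map, QD.card_Asub]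

lemma smallH_proper (t : Fin (2 ^ (k + 2))) : IsProperCentralizer (smallH k t) :=
  (isProperCentralizer_map _).mpr ⟨QD.cent_B_ne_top _, _, rfl⟩

lemma smallH_card (t : Fin (2 ^ (k + 2))) : Nat.card (smallH k t) = 4 := by
  rw [smallH, card_map, QD.card_cent_B]

lemma big_card_ne : (2 : ℕ) ^ (k + 3) ≠ 4 := by
  have h : (2:ℕ)^3 ≤ 2 ^ (k + 3) := Nat.pow_le_pow_right (by norm_num) (by omega)
  norm_num at h
  omega

lemma bigH_ne_smallH (t : Fin (2 ^ (k + 2))) : bigH k ≠ smallH k t := fun h =>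
  big_card_ne (k := k) (by rw [← bigH_card, h, smallH_card])

lemma coe_lt (t : Fin (2 ^ (k + 2))) : (t : ℕ) < 2 ^ (k + 3) :=
  lt_of_lt_of_le t.2 (Nat.pow_le_pow_right (by norm_num) (by omega))

lemma smallH_inj : Function.Injective (smallH k) := by
  intro t t' h
  have h2 := Subgroup.map_injective (f := (Θ k).toMonoidHom) (Θ k).injective h
  have h3 := QD.cent_B_inj h2
  have hc : ((2:ZMod N) ^ (k + 2)) = (((2 ^ (k + 2) : ℕ)) : ZMod N) := by push_cast; ring
  rcases h3 with h4 | h4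
  · have := congrArg ZMod.val h4
    rw [ZMod.val_natCast_of_lt (coe_lt t'), ZMod.val_natCast_of_lt (coe_lt t)] at this
    exact (Fin.ext this).symm
  · rw [hc, ← Nat.cast_add] at h4
    have := congrArg ZMod.val h4
    rw [ZMod.val_natCast_of_lt (coe_lt t'), ZMod.val_natCast_of_lt (by
      have := t.2
      have h8 : (2:ℕ)^(k+3) = 2 ^ (k+2) + 2 ^ (k+2) := by ring
      omega)] at this
    have := t'.2
    omega

lemma classify_PG {H : Subgroup (PG k)} (h : IsProperCentralizer H) :
    H = bigH k ∨ ∃ t : Fin (2 ^ (k + 2)), H = smallH k t := by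
  have hK : IsProperCentralizer (H.map (Φ (k := k)).toMonoidHom) :=
    (isProperCentralizer_map _).mpr h
  have hmaps : (H.map (Φ (k := k)).toMonoidHom).map (Θ k).toMonoidHom = H :=
    map_map_symm (Φ (k := k)) H
  rcases QD.classify hK.1 hK.2 with hA | ⟨i, hi⟩
  · left
    rw [← hmaps, hA]
    rfl
  · right
    -- find a representative below 2^(k+2)
    have hvlt : i.val < 2 ^ (k + 3) := ZMod.val_lt i
    have h8 : (2:ℕ)^(k+3) = 2 ^ (k+2) + 2 ^ (k+2) := by ring
    have hc : ((2:ZMod N) ^ (k + 2)) = (((2 ^ (k + 2) : ℕ)) : ZMod N) := by push_cast; ring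
    have hi_cast : ((i.val : ℕ) : ZMod N) = i := by rw [ZMod.natCast_val, ZMod.cast_id]
    by_cases hlt : i.val < 2 ^ (k + 2)
    · refine ⟨⟨i.val, hlt⟩, ?_⟩
      rw [← hmaps, hi, smallH]
      exact congrArg
        (fun z => (Subgroup.centralizer {(⟨z, 1⟩ : QD k)}).map (Θ k).toMonoidHom) hi_cast.symm
    · refine ⟨⟨i.val - 2 ^ (k + 2), by omega⟩, ?_⟩
      rw [← hmaps, hi, smallH]
      have key : i = (((i.val - 2 ^ (k + 2) : ℕ)) : ZMod N) + 2 ^ (k + 2) := by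
        rw [hc, ← Nat.cast_add, show (i.val - 2 ^ (k + 2) + 2 ^ (k + 2) : ℕ) = i.val by omega,
          hi_cast]
      rw [show (⟨i, 1⟩ : QD k) = ⟨(((i.val - 2 ^ (k + 2) : ℕ)) : ZMod N) + 2 ^ (k + 2), 1⟩ by
        rw [← key]]
      congr 1
      exact (QD.cent_B_add_c _).symm

def vfun (k : ℕ) : Fin 1 ⊕ Fin (2 ^ (k + 2)) → {H : Subgroup (PG k) // IsProperCentralizer H}
  | .inl _ => ⟨bigH k, bigH_proper⟩
  | .inr t => ⟨smallH k t, smallH_proper t⟩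

lemma vfun_bij : Function.Bijective (vfun k) := by
  constructor
  · rintro (a | t) (b | t') h
    · rw [Subsingleton.elim a b]
    · exact absurd (congrArg (fun x => x.1) h) (bigH_ne_smallH t')
    · exact absurd (congrArg (fun x => x.1) h).symm (bigH_ne_smallH t)
    · have h1 : smallH k t = smallH k t' := congrArg Subtype.val h
      exact congrArg Sum.inr (smallH_inj h1)
  · rintro ⟨H, hH⟩
    rcases classify_PG hH with rfl | ⟨t, rfl⟩
    · exact ⟨.inl 0, rfl⟩
    · exact ⟨.inr t, rfl⟩

lemma count1 (k : ℕ) :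
    {H : Subgroup (PG k) | IsProperCentralizer H}.ncard = 2 ^ (k + 2) + 1 := by
  have hrange : {H : Subgroup (PG k) | IsProperCentralizer H} =
      Set.range (fun v => (vfun k v).1) := by
    ext H
    constructor
    · intro hH
      obtain ⟨v, hv⟩ := vfun_bij.2 ⟨H, hH⟩
      exact ⟨v, congrArg (fun x => x.1) hv⟩
    · rintro ⟨v, rfl⟩
      exact (vfun k v).2
  have hinj : Function.Injective (fun v => (vfun k v).1) :=
    fun a b h => vfun_bij.1 (Subtype.ext h)
  rw [hrange, ← Nat.card_coe_set_eq, Nat.card_range_of_injective hinj,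
    Nat.card_sum, Nat.card_eq_fintype_card, Nat.card_eq_fintype_card,
    Fintype.card_fin, Fintype.card_fin]
  omega

lemma count2 (k : ℕ) :
    {H : Subgroup (PG k) | IsProperCentralizer H ∧ Nat.card H = 2 ^ (k + 3)}.ncard = 1 := by
  have hset : {H : Subgroup (PG k) | IsProperCentralizer H ∧ Nat.card H = 2 ^ (k + 3)} =
      {bigH k} := by
    ext H
    simp only [Set.mem_setOf_eq, Set.mem_singleton_iff]
    constructor
    · rintro ⟨hH, hcard⟩
      rcases classify_PG hH with rfl | ⟨t, rfl⟩
      · rfl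
      · rw [smallH_card] at hcard
        exact absurd hcard.symm big_card_ne
    · rintro rfl
      exact ⟨bigH_proper, bigH_card⟩
  rw [hset, Set.ncard_singleton]

lemma count3 (k : ℕ) :
    {H : Subgroup (PG k) | IsProperCentralizer H ∧ Nat.card H = 4}.ncard = 2 ^ (k + 2) := by
  have hset : {H : Subgroup (PG k) | IsProperCentralizer H ∧ Nat.card H = 4} =
      Set.range (smallH k) := by
    ext H
    simp only [Set.mem_setOf_eq, Set.mem_range]
    constructor
    · rintro ⟨hH, hcard⟩
      rcases classify_PG hH with rfl | ⟨t, rfl⟩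
      · rw [bigH_card] at hcard
        exact absurd hcard big_card_ne
      · exact ⟨t, rfl⟩
    · rintro ⟨t, rfl⟩
      exact ⟨smallH_proper t, smallH_card t⟩
  rw [hset, ← Nat.card_coe_set_eq, Nat.card_range_of_injective smallH_inj,
    Nat.card_eq_fintype_card, Fintype.card_fin]

lemma graph_iso (k : ℕ) :
    Nonempty (cocentralizerGraph (PG k) ≃g starGraph (2 ^ (k + 2))) := by
  refine ⟨(RelIso.mk (Equiv.ofBijective (vfun k) vfun_bij) ?_
      : starGraph (2 ^ (k + 2)) ≃g cocentralizerGraph (PG k)).symm⟩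
  rintro (a | t) (b | t') <;>
    simp only [Equiv.ofBijective_apply, cocentralizerGraph, SimpleGraph.compl_adj,
      starGraph, completeBipartiteGraph, ne_eq, vfun]
  · constructor
    · rintro ⟨hne, -⟩
      exact (hne trivial).elim
    · rintro (⟨-, h⟩ | ⟨h, -⟩) <;> simp at h
  · constructor
    · intro; simp
    · intro
      refine ⟨?_, ?_⟩
      · intro h
        exact bigH_ne_smallH t' (congrArg (fun x => x.1) h)
      · rintro (⟨-, hcc⟩ : _ ≠ _ ∧ _)
        show False
        have : Nat.card (bigH k) = Nat.card (smallH k t') := hcc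
        rw [bigH_card, smallH_card] at this
        exact big_card_ne this
  · constructor
    · intro; simp
    · intro
      refine ⟨?_, ?_⟩
      · intro h
        exact bigH_ne_smallH t (congrArg (fun x => x.1) h).symm
      · rintro (⟨-, hcc⟩ : _ ≠ _ ∧ _)
        show False
        have : Nat.card (smallH k t) = Nat.card (bigH k) := hcc
        rw [bigH_card, smallH_card] at this
        exact big_card_ne this.symm
  · constructor
    · rintro ⟨hne, hnadj⟩
      exfalso
      apply hnadj
      refine (⟨hne, ?_⟩ : _ ≠ _ ∧ _)
      show Nat.card (smallH k t) = Nat.card (smallH k t')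
      rw [smallH_card, smallH_card]
    · rintro (⟨h, -⟩ | ⟨-, h⟩) <;> simp at h

end QDFinal

theorem quasidihedral_cocentralizer_graph (n : ℕ) (hn : 4 ≤ n) :
    {H : Subgroup (QuasidihedralGroup n) | IsProperCentralizer H}.ncard = 2 ^ (n - 2) + 1 ∧
    {H : Subgroup (QuasidihedralGroup n) |
      IsProperCentralizer H ∧ Nat.card H = 2 ^ (n - 1)}.ncard = 1 ∧
    {H : Subgroup (QuasidihedralGroup n) |
      IsProperCentralizer H ∧ Nat.card H = 4}.ncard = 2 ^ (n - 2) ∧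
    Nonempty (cocentralizerGraph (QuasidihedralGroup n) ≃g starGraph (2 ^ (n - 2))) := by
  obtain ⟨k, rfl⟩ : ∃ k, n = k + 4 := ⟨n - 4, by omega⟩
  exact ⟨QDFinal.count1 k, QDFinal.count2 k, QDFinal.count3 k, QDFinal.graph_iso k⟩
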